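/- Let (R,Δ) be an odd form ring, n ∈ ℕ, and σ ∈ GL_{2n+1}(R), with the entries of σ⁻¹ written σ'_{ij}. Then σ ∈ U_{2n+1}(R,Δ) if and only if both of the following hold: (1) σ'_{ij} = λ^{−(ε(i)+1)/2}·\overline{σ_{−j,−i}}·λ^{(ε(j)+1)/2} for all i,j ∈ Θ_hb; μσ'_{0j} = \overline{σ_{−j,0}}·λ^{(ε(j)+1)/2} for all j ∈ Θ_hb; σ'_{i0} = λ^{−(ε(i)+1)/2}·\overline{σ_{0,−i}}·μ for all i ∈ Θ_hb; and μσ'_{00} = \overline{σ_{00}}·μ; and (2) q(σ_{*j}) ∸ (δ_{0j},0) ∈ Δ for all j ∈ Θ, where σ_{*j} denotes the j-th column of σ. -/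

import Mathlib

open scoped BigOperators

noncomputable section

/-- The index set `Θ = {-n, …, n}` for the odd-dimensional unitary group. -/
abbrev Idx (n : ℕ) : Type := {i : ℤ // i ∈ Finset.Icc (-(n : ℤ)) (n : ℤ)}

namespace Idx

/-- Negation of an index. -/
def neg {n : ℕ} (i : Idx n) : Idx n :=
  ⟨-i.1, by have h := i.2; rw [Finset.mem_Icc] at h ⊢; omega⟩

/-- The index `0`. -/
def zero (n : ℕ) : Idx n := ⟨0, by rw [Finset.mem_Icc]; omega⟩

/-- Construct an index from an integer. -/
def of (n : ℕ) (i : ℤ) (h1 : -(n : ℤ) ≤ i) (h2 : i ≤ (n : ℤ)) : Idx n :=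
  ⟨i, Finset.mem_Icc.mpr ⟨h1, h2⟩⟩

end Idx

/-- The positive indices `{1, …, n}`. -/
def posIdx (n : ℕ) : Finset (Idx n) := Finset.univ.filter (fun i => 0 < i.1)

/-- The position of an index in the ordering `1, …, n, 0, -n, …, -1`. -/
def ordIdx {n : ℕ} (i : Idx n) : ℤ :=
  if 0 < i.1 then i.1 else if i.1 = 0 then (n : ℤ) + 1 else 2 * (n : ℤ) + 2 + i.1

/-- The group `GL_{2n+1}(R)` of invertible `(2n+1) × (2n+1)` matrices. -/
abbrev GLn (R : Type*) [Ring R] (n : ℕ) : Type _ := (Matrix (Idx n) (Idx n) R)ˣ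

/-- `J(Ω) = {y | ∃ z, (y, z) ∈ Ω}`. -/
def JSet {R : Type*} (Ω : Set (R × R)) : Set R := {y | ∃ z, (y, z) ∈ Ω}

/-- `M(R, Δ) = {u | u_0 ∈ J(Δ)}`. -/
def MRD {R : Type*} (Δ : Set (R × R)) (n : ℕ) : Set (Idx n → R) :=
  {u | u (Idx.zero n) ∈ JSet Δ}

/-- `M(I, Ω) = {u | u_i ∈ I for i ∈ Θ_hb, u_0 ∈ J(Ω)}`. -/
def MIO {R : Type*} (I : Set R) (Ω : Set (R × R)) (n : ℕ) : Set (Idx n → R) :=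
  {u | (∀ i : Idx n, i.1 ≠ 0 → u i ∈ I) ∧ u (Idx.zero n) ∈ JSet Ω}

/-- The data of an odd quadruple `(R, ⁻, λ, μ)`: a ring with an anti-isomorphism `bar`,
a symmetry `lam` and an element `mu` with `mu = bar mu * lam`. -/
structure OddFormRingData (R : Type*) [Ring R] where
  bar : R → R
  lam : R
  mu : R
  bar_bijective : Function.Bijective bar
  bar_add : ∀ x y : R, bar (x + y) = bar x + bar y
  bar_mul : ∀ x y : R, bar (x * y) = bar y * bar x
  bar_one : bar 1 = 1
  bar_bar : ∀ x : R, bar (bar x) = lam * x * bar lam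
  mu_symm : mu = bar mu * lam

namespace OddFormRingData

variable {R : Type*} [Ring R] (D : OddFormRingData R)

/-- Heisenberg addition `∔` on `R × R`. -/
def hAdd (a b : R × R) : R × R := (a.1 + b.1, a.2 + b.2 - D.bar a.1 * D.mu * b.1)

/-- Heisenberg negation. -/
def hNeg (a : R × R) : R × R := (-a.1, -a.2 - D.bar a.1 * D.mu * a.1)

/-- Heisenberg subtraction `∸`. -/
def hSub (a b : R × R) : R × R := D.hAdd a (D.hNeg b)

/-- The scalar operation `(x, y) • a = (x a, ā y a)`. -/
def hSMul (a : R × R) (r : R) : R × R := (a.1 * r, D.bar r * a.2 * r)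

/-- `Δ_min = {(0, x - x̄ λ) | x ∈ R}`. -/
def DeltaMin : Set (R × R) := {p | ∃ x : R, p = (0, x - D.bar x * D.lam)}

/-- `Δ_max = {(x, y) | x̄ μ x + y + ȳ λ = 0}`. -/
def DeltaMax : Set (R × R) := {p | D.bar p.1 * D.mu * p.1 + p.2 + D.bar p.2 * D.lam = 0}

/-- `Δ` is an odd form parameter. -/
structure IsFormParam (Δ : Set (R × R)) : Prop where
  add_mem : ∀ a ∈ Δ, ∀ b ∈ Δ, D.hAdd a b ∈ Δ
  neg_mem : ∀ a ∈ Δ, D.hNeg a ∈ Δ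
  smul_mem : ∀ a ∈ Δ, ∀ r : R, D.hSMul a r ∈ Δ
  min_le : D.DeltaMin ⊆ Δ
  le_max : Δ ⊆ D.DeltaMax

/-- `I` is an involution invariant (two-sided) ideal of `R`. -/
structure IsInvIdeal (I : Set R) : Prop where
  zero_mem : (0 : R) ∈ I
  add_mem : ∀ x ∈ I, ∀ y ∈ I, x + y ∈ I
  neg_mem : ∀ x ∈ I, -x ∈ I
  mul_left : ∀ r : R, ∀ x ∈ I, r * x ∈ I
  mul_right : ∀ r : R, ∀ x ∈ I, x * r ∈ I
  bar_mem : ∀ x ∈ I, D.bar x ∈ I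

/-- `Ĩ = {x | ȳ μ x ∈ I for all y ∈ J(Δ)}`. -/
def tildeI (Δ : Set (R × R)) (I : Set R) : Set R :=
  {x | ∀ y ∈ JSet Δ, D.bar y * D.mu * x ∈ I}

/-- `Ω^I_min`, the `∔`-subgroup of `R × R` generated by `{(0, x - x̄λ) | x ∈ I}` and
`{a • c | a ∈ Δ, c ∈ I}`. -/
inductive OmegaMin (Δ : Set (R × R)) (I : Set R) : R × R → Prop
  | base (x : R) (hx : x ∈ I) : OmegaMin Δ I (0, x - D.bar x * D.lam)
  | smul (a : R × R) (ha : a ∈ Δ) (c : R) (hc : c ∈ I) : OmegaMin Δ I (D.hSMul a c)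
  | add (a b : R × R) : OmegaMin Δ I a → OmegaMin Δ I b → OmegaMin Δ I (D.hAdd a b)
  | neg (a : R × R) : OmegaMin Δ I a → OmegaMin Δ I (D.hNeg a)

/-- `Ω^I_min` as a set. -/
def OmegaMinSet (Δ : Set (R × R)) (I : Set R) : Set (R × R) := {p | D.OmegaMin Δ I p}

/-- `Ω^I_max = Δ ∩ (Ĩ × I)`. -/
def OmegaMaxSet (Δ : Set (R × R)) (I : Set R) : Set (R × R) :=
  {p | p ∈ Δ ∧ p.1 ∈ D.tildeI Δ I ∧ p.2 ∈ I}

/-- `Ω` is a relative odd form parameter for `I`. -/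
structure IsRelFormParam (Δ : Set (R × R)) (I : Set R) (Ω : Set (R × R)) : Prop where
  add_mem : ∀ a ∈ Ω, ∀ b ∈ Ω, D.hAdd a b ∈ Ω
  neg_mem : ∀ a ∈ Ω, D.hNeg a ∈ Ω
  smul_mem : ∀ a ∈ Ω, ∀ r : R, D.hSMul a r ∈ Ω
  min_le : D.OmegaMinSet Δ I ⊆ Ω
  le_max : Ω ⊆ D.OmegaMaxSet Δ I

/-- `(I, Ω)` is an odd form ideal of `(R, Δ)`. -/
def IsFormIdeal (Δ : Set (R × R)) (I : Set R) (Ω : Set (R × R)) : Prop :=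
  D.IsInvIdeal I ∧ D.IsRelFormParam Δ I Ω

/-- `Ω^{-1} = {(x, y) | (x, ȳ) ∈ Ω}`. -/
def paramInv (Ω : Set (R × R)) : Set (R × R) := {p | (p.1, D.bar p.2) ∈ Ω}

/-- `Ω^{-ε(i)}`. -/
def paramPow {n : ℕ} (Ω : Set (R × R)) (i : Idx n) : Set (R × R) :=
  if 0 < i.1 then D.paramInv Ω else Ω

/-- The λ-Hermitian form `b`. -/
def bform {n : ℕ} (u v : Idx n → R) : R :=
  (∑ i ∈ posIdx n, D.bar (u i) * v i.neg) + D.bar (u (Idx.zero n)) * D.mu * v (Idx.zero n)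
    + ∑ i ∈ posIdx n, D.bar (u i.neg) * D.lam * v i

/-- The quadratic map `q`. -/
def qform {n : ℕ} (u : Idx n → R) : R × R :=
  (u (Idx.zero n), ∑ i ∈ posIdx n, D.bar (u i) * u i.neg)

/-- The odd-dimensional unitary group `U_{2n+1}(R, Δ)`, as a subset of `GL_{2n+1}(R)`. -/
def unitary (Δ : Set (R × R)) (n : ℕ) : Set (GLn R n) :=
  {σ | (∀ u v : Idx n → R,
          D.bform (Matrix.mulVec σ.val u)
            (Matrix.mulVec σ.val v) = D.bform u v)
      ∧ ∀ u : Idx n → R,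
          D.hSub (D.qform (Matrix.mulVec σ.val u)) (D.qform u) ∈ Δ}

/-- The short root matrix `T_{ij}(x)`. -/
def shortRootMat {n : ℕ} (i j : Idx n) (x : R) : Matrix (Idx n) (Idx n) R :=
  1 + Matrix.single i j x
    - Matrix.single j.neg i.neg
        ((if 0 < j.1 then (1 : R) else D.bar D.lam) * D.bar x *
          (if 0 < i.1 then (1 : R) else D.lam))

/-- The extra short root matrix `T_i(x, y)`. -/
def extraShortRootMat {n : ℕ} (i : Idx n) (x y : R) : Matrix (Idx n) (Idx n) R :=
  1 + Matrix.single (Idx.zero n) i.neg x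
    - Matrix.single i (Idx.zero n)
        ((if 0 < i.1 then D.bar D.lam else (1 : R)) * D.bar x * D.mu)
    + Matrix.single i i.neg y

/-- `g` is a short root matrix `T_{ij}(x)`. -/
def IsShortRootElem {n : ℕ} (g : GLn R n) : Prop :=
  ∃ (i j : Idx n) (x : R), i.1 ≠ 0 ∧ j.1 ≠ 0 ∧ i.1 ≠ j.1 ∧ i.1 ≠ -j.1 ∧
    g.val = D.shortRootMat i j x

/-- `g` is an extra short root matrix `T_i(x, y)` with `(x, y) ∈ Δ^{-ε(i)}`. -/
def IsExtraShortRootElem {n : ℕ} (Δ : Set (R × R)) (g : GLn R n) : Prop :=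
  ∃ (i : Idx n) (x y : R), i.1 ≠ 0 ∧ (x, y) ∈ D.paramPow Δ i ∧
    g.val = D.extraShortRootMat i x y

/-- The elementary subgroup `EU_{2n+1}(R, Δ)`. -/
def elemGroup (Δ : Set (R × R)) (n : ℕ) : Subgroup (GLn R n) :=
  Subgroup.closure {g | D.IsShortRootElem g ∨ D.IsExtraShortRootElem Δ g}

/-- `g` is an `(I, Ω)`-elementary short root matrix. -/
def IsRelShortRootElem {n : ℕ} (I : Set R) (g : GLn R n) : Prop :=
  ∃ (i j : Idx n) (x : R), i.1 ≠ 0 ∧ j.1 ≠ 0 ∧ i.1 ≠ j.1 ∧ i.1 ≠ -j.1 ∧ x ∈ I ∧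
    g.val = D.shortRootMat i j x

/-- `g` is an `(I, Ω)`-elementary extra short root matrix. -/
def IsRelExtraShortRootElem {n : ℕ} (Ω : Set (R × R)) (g : GLn R n) : Prop :=
  ∃ (i : Idx n) (x y : R), i.1 ≠ 0 ∧ (x, y) ∈ D.paramPow Ω i ∧
    g.val = D.extraShortRootMat i x y

/-- The preelementary subgroup `EU_{2n+1}(I, Ω)`. -/
def preElemGroup (I : Set R) (Ω : Set (R × R)) (n : ℕ) : Subgroup (GLn R n) :=
  Subgroup.closure {g | D.IsRelShortRootElem I g ∨ D.IsRelExtraShortRootElem Ω g}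

/-- The relative elementary subgroup `EU_{2n+1}((R, Δ), (I, Ω))`,
the normal closure of `EU_{2n+1}(I, Ω)` in `EU_{2n+1}(R, Δ)`. -/
def elemRelGroup (Δ : Set (R × R)) (I : Set R) (Ω : Set (R × R)) (n : ℕ) : Subgroup (GLn R n) :=
  Subgroup.closure {x | ∃ e ∈ D.elemGroup Δ n, ∃ g ∈ D.preElemGroup I Ω n, x = e * g * e⁻¹}

/-- The principal congruence subgroup `U_{2n+1}((R, Δ), (I, Ω))`. -/
def principalCongruence (Δ : Set (R × R)) (I : Set R) (Ω : Set (R × R)) (n : ℕ) :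
    Set (GLn R n) :=
  {σ | σ ∈ D.unitary Δ n
      ∧ (∀ i j : Idx n, i.1 ≠ 0 → j.1 ≠ 0 →
          σ.val i j - (if i = j then (1 : R) else 0) ∈ I)
      ∧ ∀ u ∈ MRD Δ n,
          D.hSub (D.qform (Matrix.mulVec σ.val u)) (D.qform u) ∈ Ω}

/-- The group `Ũ_{2n+1}((R, Δ), (I, Ω))`. -/
def tildeU (Δ : Set (R × R)) (I : Set R) (Ω : Set (R × R)) (n : ℕ) : Set (GLn R n) :=
  {σ | σ ∈ D.unitary Δ n ∧ ∀ u ∈ MIO I Ω n,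
      D.hSub (D.qform (Matrix.mulVec σ.val u)) (D.qform u) ∈ Ω
      ∧ D.hSub (D.qform (Matrix.mulVec ((σ⁻¹).val) u)) (D.qform u) ∈ Ω}

/-- The full congruence subgroup `CU_{2n+1}((R, Δ), (I, Ω))`. -/
def fullCongruence (Δ : Set (R × R)) (I : Set R) (Ω : Set (R × R)) (n : ℕ) : Set (GLn R n) :=
  {σ | σ ∈ D.tildeU Δ I Ω n ∧ ∀ τ ∈ D.elemGroup Δ n,
      σ * τ * σ⁻¹ * τ⁻¹ ∈ D.principalCongruence Δ I Ω n}

/-- `H` is a subgroup of `U_{2n+1}(R, Δ)`. -/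
structure IsSubgroupOfUnitary (Δ : Set (R × R)) (n : ℕ) (H : Set (GLn R n)) : Prop where
  subset : H ⊆ D.unitary Δ n
  one_mem : (1 : GLn R n) ∈ H
  mul_mem : ∀ a ∈ H, ∀ b ∈ H, a * b ∈ H
  inv_mem : ∀ a ∈ H, a⁻¹ ∈ H

/-- `H` is normalized by the elementary subgroup `EU_{2n+1}(R, Δ)`. -/
def IsENormal (Δ : Set (R × R)) (n : ℕ) (H : Set (GLn R n)) : Prop :=
  ∀ e ∈ D.elemGroup Δ n, ∀ h ∈ H, e * h * e⁻¹ ∈ H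

/-- The ideal part of the level of `H`. -/
def levelI {n : ℕ} (H : Set (GLn R n)) : Set R :=
  {x | ∃ i j : Idx n, i.1 ≠ 0 ∧ j.1 ≠ 0 ∧ i.1 ≠ j.1 ∧ i.1 ≠ -j.1 ∧
      ∃ g ∈ H, g.val = D.shortRootMat i j x}

/-- The form parameter part of the level of `H`. -/
def levelOmega {n : ℕ} (Δ : Set (R × R)) (H : Set (GLn R n)) : Set (R × R) :=
  {p | p ∈ Δ ∧ ∃ i : Idx n, i.1 < 0 ∧
      ∃ g ∈ H, g.val = D.extraShortRootMat i p.1 p.2}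

/-- The relative odd form parameter `^σΩ` for `I` defined by `Ω` and `σ`. -/
def transportedParam (Δ : Set (R × R)) (I : Set R) (Ω : Set (R × R)) (n : ℕ) (σ : GLn R n) :
    Set (R × R) :=
  {p | ∃ x y : R, (x, y) ∈ Ω ∧ ∃ m ∈ D.OmegaMinSet Δ I,
      p = D.hAdd (D.hAdd
            (D.hSMul
              (D.hSub (D.qform (fun i => σ.val i (Idx.zero n)))
                ((1 : R), (0 : R))) x)
            (x, y)) m}

/-- `TEU_{2n+1}(R, Δ)`: upper triangular elementary matrices with ones on the diagonal,
with respect to the index ordering `1, …, n, 0, -n, …, -1`. -/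
def upperTriangularElem (Δ : Set (R × R)) (n : ℕ) : Set (GLn R n) :=
  {f | f ∈ D.elemGroup Δ n
      ∧ (∀ i j : Idx n, ordIdx j < ordIdx i → f.val i j = 0)
      ∧ ∀ i : Idx n, f.val i i = 1}

/-- `UEU_{2n+1}(R, Δ)`: elementary matrices of block form `(A B C; 0 1 D; 0 0 E)`
with respect to the decomposition `Θ₊, {0}, Θ₋`. -/
def blockUpperElem (Δ : Set (R × R)) (n : ℕ) : Set (GLn R n) :=
  {f | f ∈ D.elemGroup Δ n
      ∧ (∀ i j : Idx n, i.1 ≤ 0 → 0 < j.1 → f.val i j = 0)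
      ∧ f.val (Idx.zero n) (Idx.zero n) = 1
      ∧ ∀ i : Idx n, i.1 < 0 → f.val i (Idx.zero n) = 0}

/-- `R` is quasifinite: it is the union of a directed family of subrings, each closed
under the involution, containing `λ` and `μ`, and finitely generated as a module over its
center. -/
def IsQuasifinite : Prop :=
  ∃ S : Set (Subring R), S.Nonempty ∧ DirectedOn (· ≤ ·) S ∧
    (∀ A ∈ S, (∀ x ∈ A, D.bar x ∈ A) ∧ D.lam ∈ A ∧ D.mu ∈ A ∧
      ∃ (m : ℕ) (v : Fin m → R), (∀ k, v k ∈ A) ∧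
        ∀ x ∈ A, ∃ c : Fin m → R,
          (∀ k, c k ∈ A ∧ ∀ y ∈ A, c k * y = y * c k) ∧ x = ∑ k, c k * v k) ∧
    ∀ x : R, ∃ A ∈ S, x ∈ A

end OddFormRingData

/-- The Jacobson radical of a (possibly noncommutative) ring. -/
def jacobsonRadical (R : Type*) [Ring R] : Ideal R := sInf {J : Ideal R | J.IsMaximal}

/-- `R` is semilocal: `R / rad R` is semisimple (hence semisimple Artinian). -/
def IsSemilocalRing (R : Type*) [Ring R] : Prop :=
  IsSemisimpleModule R (R ⧸ jacobsonRadical R)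

/-- A bundled (possibly noncommutative) ring. -/
structure BundledRing : Type (u + 1) where
  carrier : Type u
  [str : Ring carrier]

attribute [instance] BundledRing.str

instance : CoeSort BundledRing (Type u) := ⟨BundledRing.carrier⟩

universe u

section Aux

namespace OddFormRingData

variable {R : Type*} [Ring R] (D : OddFormRingData R) {n : ℕ}

lemma bar_zero : D.bar 0 = 0 := by
  have h : D.bar 0 + D.bar 0 = D.bar 0 + 0 := by rw [← D.bar_add]; simp
  exact add_left_cancel h

lemma bar_neg (x : R) : D.bar (-x) = - D.bar x := by
  have h : D.bar (-x) + D.bar x = 0 := by rw [← D.bar_add]; simp [D.bar_zero]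
  exact eq_neg_of_add_eq_zero_left h

lemma bar_sub (x y : R) : D.bar (x - y) = D.bar x - D.bar y := by
  rw [sub_eq_add_neg, D.bar_add, D.bar_neg, sub_eq_add_neg]

/-- `bar` as an additive monoid hom. -/
def barHom : R →+ R := AddMonoidHom.mk' D.bar D.bar_add

lemma bar_sum {ι : Type*} (s : Finset ι) (f : ι → R) :
    D.bar (∑ i ∈ s, f i) = ∑ i ∈ s, D.bar (f i) := map_sum D.barHom f s

lemma lam_mul_barlam : D.lam * D.bar D.lam = 1 := by
  have h := D.bar_bar 1
  rw [D.bar_one, D.bar_one, mul_one] at h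
  exact h.symm

lemma barlam_mul_lam : D.bar D.lam * D.lam = 1 := by
  have hinj : Function.Injective (fun x => D.bar (D.bar x)) :=
    D.bar_bijective.injective.comp D.bar_bijective.injective
  have h1 : D.bar (D.bar (D.bar D.lam * D.lam)) = D.bar (D.bar 1) := by
    rw [D.bar_bar, D.bar_bar, mul_one, ← mul_assoc, D.lam_mul_barlam, one_mul, D.lam_mul_barlam]
  exact hinj h1

lemma barmu_mul_lam : D.bar D.mu = D.mu * D.bar D.lam := by
  conv_lhs => rw [D.mu_symm]
  rw [D.bar_mul, D.bar_bar, ← mul_assoc, ← mul_assoc, D.barlam_mul_lam, one_mul]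

/-- Key identity: `bar (bar a * mu * b) * lam = bar b * mu * a`. -/
lemma bar_mu_bar (a b : R) : D.bar (D.bar a * D.mu * b) * D.lam = D.bar b * D.mu * a := by
  rw [D.bar_mul, D.bar_mul, D.bar_bar, D.barmu_mul_lam]
  simp only [mul_assoc]
  rw [D.barlam_mul_lam, mul_one, ← mul_assoc (D.bar D.lam) D.lam a, D.barlam_mul_lam, one_mul]

end OddFormRingData

namespace Idx

variable {n : ℕ}

@[simp] lemma neg_neg (i : Idx n) : i.neg.neg = i := by
  apply Subtype.ext; simp [Idx.neg]

@[simp] lemma neg_val (i : Idx n) : (i.neg).1 = -i.1 := rfl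

@[simp] lemma neg_zero : (Idx.zero n).neg = Idx.zero n := by
  apply Subtype.ext; simp [Idx.neg, Idx.zero]

lemma neg_injective : Function.Injective (Idx.neg : Idx n → Idx n) := by
  intro a b h
  apply Subtype.ext
  have := congrArg (fun x => x.1) h
  simp only [neg_val] at this
  omega

@[simp] lemma zero_val : (Idx.zero n).1 = 0 := rfl

lemma eq_zero_iff (i : Idx n) : i = Idx.zero n ↔ i.1 = 0 := by
  constructor
  · intro h; rw [h]; rfl
  · intro h; exact Subtype.ext h

end Idx

@[simp] lemma mem_posIdx {n : ℕ} (i : Idx n) : i ∈ posIdx n ↔ 0 < i.1 := by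
  simp [posIdx]

lemma sum_idx_split {n : ℕ} {M : Type*} [AddCommMonoid M] (g : Idx n → M) :
    ∑ i, g i = (∑ i ∈ posIdx n, g i) + g (Idx.zero n) + ∑ i ∈ posIdx n, g i.neg := by
  classical
  have huniv : (Finset.univ : Finset (Idx n))
      = posIdx n ∪ ({Idx.zero n} ∪ (posIdx n).image Idx.neg) := by
    ext i
    simp only [Finset.mem_univ, Finset.mem_union, Finset.mem_singleton, Finset.mem_image,
      mem_posIdx, true_iff]
    rcases lt_trichotomy (i.1 : ℤ) 0 with h | h | h
    · exact Or.inr (Or.inr ⟨i.neg, by simpa using h, by simp⟩)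
    · exact Or.inr (Or.inl ((Idx.eq_zero_iff i).2 h))
    · exact Or.inl h
  have hd1 : Disjoint (posIdx n) ({Idx.zero n} ∪ (posIdx n).image Idx.neg) := by
    rw [Finset.disjoint_left]
    intro i hi hmem
    simp only [mem_posIdx] at hi
    simp only [Finset.mem_union, Finset.mem_singleton, Finset.mem_image, mem_posIdx] at hmem
    rcases hmem with h | ⟨j, hj, hji⟩
    · rw [Idx.eq_zero_iff] at h; omega
    · have : i.1 = -j.1 := by rw [← hji]; simp
      omega
  have hd2 : Disjoint ({Idx.zero n} : Finset (Idx n)) ((posIdx n).image Idx.neg) := by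
    rw [Finset.disjoint_left]
    intro i hi hmem
    simp only [Finset.mem_singleton] at hi
    simp only [Finset.mem_image, mem_posIdx] at hmem
    rcases hmem with ⟨j, hj, hji⟩
    have : i.1 = -j.1 := by rw [← hji]; simp
    rw [hi] at this
    simp at this
    omega
  rw [huniv, Finset.sum_union hd1, Finset.sum_union hd2, Finset.sum_singleton,
    Finset.sum_image (fun a _ b _ h => Idx.neg_injective h)]
  rw [add_assoc]

namespace OddFormRingData

variable {R : Type*} [Ring R] (D : OddFormRingData R) {n : ℕ}

lemma bar_lam_bar (a b : R) : D.bar (D.bar a * D.lam * b) * D.lam = D.bar b * a := by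
  rw [D.bar_mul, D.bar_mul, D.bar_bar]
  simp only [mul_assoc]
  rw [D.barlam_mul_lam, mul_one, ← mul_assoc (D.bar D.lam) D.lam a, D.barlam_mul_lam, one_mul]

/-- Diagonal coefficients of the hermitian form in the single-sum presentation. -/
def cc (n : ℕ) : Idx n → R := fun i => if 0 < i.1 then D.lam else if i.1 = 0 then D.mu else 1

lemma cc_pos {i : Idx n} (h : 0 < i.1) : D.cc n i = D.lam := by simp [cc, h]

lemma cc_zero : D.cc n (Idx.zero n) = D.mu := by simp [cc]

lemma cc_neg {i : Idx n} (h : i.1 < 0) : D.cc n i = 1 := by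
  unfold cc; rw [if_neg (by omega), if_neg (by omega)]

@[simp] lemma qform_fst (u : Idx n → R) : (D.qform u).1 = u (Idx.zero n) := rfl

lemma bform_eq_sum (u v : Idx n → R) :
    D.bform u v = ∑ i, D.bar (u i.neg) * D.cc n i * v i := by
  rw [sum_idx_split (fun i => D.bar (u i.neg) * D.cc n i * v i)]
  have h1 : ∑ i ∈ posIdx n, D.bar (u i.neg) * D.cc n i * v i
      = ∑ i ∈ posIdx n, D.bar (u i.neg) * D.lam * v i :=
    Finset.sum_congr rfl fun i hi => by rw [D.cc_pos ((mem_posIdx i).1 hi)]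
  have h2 : ∑ i ∈ posIdx n, D.bar (u i.neg.neg) * D.cc n i.neg * v i.neg
      = ∑ i ∈ posIdx n, D.bar (u i) * v i.neg :=
    Finset.sum_congr rfl fun i hi => by
      rw [Idx.neg_neg, D.cc_neg (by have := (mem_posIdx i).1 hi; simp only [Idx.neg_val]; omega),
        mul_one]
  rw [h1, h2, Idx.neg_zero, D.cc_zero]
  unfold bform
  abel

lemma hSub_def' (p r : R × R) :
    D.hSub p r
      = (p.1 - r.1, p.2 - r.2 - D.bar r.1 * D.mu * r.1 + D.bar p.1 * D.mu * r.1) := by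
  simp only [hSub, hAdd, hNeg, Prod.mk.injEq]
  constructor
  · abel
  · simp only [mul_neg]; abel

lemma hSub_hSMul (p r : R × R) (a : R) :
    D.hSub (D.hSMul p a) (D.hSMul r a) = D.hSMul (D.hSub p r) a := by
  simp only [hSub_def', hSMul, Prod.mk.injEq, D.bar_mul]
  constructor
  · rw [sub_mul]
  · noncomm_ring

lemma qform_smul (u : Idx n → R) (a : R) :
    D.qform (fun i => u i * a) = D.hSMul (D.qform u) a := by
  unfold qform hSMul
  simp only [Prod.mk.injEq]
  refine ⟨trivial, ?_⟩
  rw [Finset.mul_sum, Finset.sum_mul]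
  exact Finset.sum_congr rfl fun i _ => by rw [D.bar_mul]; noncomm_ring

/-- The cocycle term in `q(u+v)`. -/
def Tq (u v : Idx n → R) : R :=
  D.bar (u (Idx.zero n)) * D.mu * v (Idx.zero n)
    + ∑ i ∈ posIdx n, (D.bar (u i) * v i.neg + D.bar (v i) * u i.neg)

/-- Half of the cocycle term. -/
def Wq (u v : Idx n → R) : R :=
  D.bar (u (Idx.zero n)) * D.mu * v (Idx.zero n) + ∑ i ∈ posIdx n, D.bar (u i) * v i.neg

lemma qform_add (u v : Idx n → R) :
    D.qform (u + v) = D.hAdd (D.hAdd (D.qform u) (D.qform v)) (0, D.Tq u v) := by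
  unfold qform hAdd Tq
  simp only [Pi.add_apply, Prod.mk.injEq, mul_zero, sub_zero, add_zero]
  refine ⟨trivial, ?_⟩
  calc ∑ i ∈ posIdx n, D.bar (u i + v i) * (u i.neg + v i.neg)
      = ∑ i ∈ posIdx n, (D.bar (u i) * u i.neg + D.bar (v i) * v i.neg
          + (D.bar (u i) * v i.neg + D.bar (v i) * u i.neg)) :=
        Finset.sum_congr rfl fun i _ => by rw [D.bar_add]; noncomm_ring
    _ = _ := by
        rw [Finset.sum_add_distrib, Finset.sum_add_distrib]
        abel

lemma Tq_eq (u v : Idx n → R) :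
    D.Tq u v = (D.Wq u v - D.bar (D.Wq u v) * D.lam) + D.bar (D.bform u v) * D.lam := by
  have h3 : D.bar (∑ i ∈ posIdx n, D.bar (u i.neg) * D.lam * v i) * D.lam
      = ∑ i ∈ posIdx n, D.bar (v i) * u i.neg := by
    rw [D.bar_sum, Finset.sum_mul]
    exact Finset.sum_congr rfl fun i _ => D.bar_lam_bar _ _
  unfold Tq Wq bform
  rw [Finset.sum_add_distrib, D.bar_add, D.bar_add, D.bar_add, add_mul, add_mul, add_mul, h3]
  abel

lemma pair_identity (p P r s : R × R) (t1 t2 : R) :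
    D.hSub (D.hAdd (D.hAdd p P) (0, t1)) (D.hAdd (D.hAdd r s) (0, t2))
      = D.hAdd (D.hAdd (D.hSub P s) (D.hSub p r))
          (0, t1 - t2 - D.bar p.1 * D.mu * P.1 + D.bar p.1 * D.mu * s.1
               + D.bar P.1 * D.mu * p.1 - D.bar s.1 * D.mu * p.1) := by
  simp only [hSub, hAdd, hNeg, Prod.mk.injEq, D.bar_add, D.bar_neg, D.bar_zero]
  constructor
  · abel
  · noncomm_ring

/-- The master identity for `q(σ(u+v)) ∸ q(u+v)`. -/
lemma hSub_qform_add (u v u' v' : Idx n → R) (hb : D.bform u' v' = D.bform u v) :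
    D.hSub (D.qform (u' + v')) (D.qform (u + v))
      = D.hAdd (D.hAdd (D.hSub (D.qform v') (D.qform v)) (D.hSub (D.qform u') (D.qform u)))
          (0, (D.Wq u' v' - D.Wq u v - D.bar (u' (Idx.zero n)) * D.mu * (v' (Idx.zero n))
                + D.bar (u' (Idx.zero n)) * D.mu * (v (Idx.zero n)))
              - D.bar (D.Wq u' v' - D.Wq u v
                  - D.bar (u' (Idx.zero n)) * D.mu * (v' (Idx.zero n))
                  + D.bar (u' (Idx.zero n)) * D.mu * (v (Idx.zero n))) * D.lam) := by
  rw [qform_add, qform_add, pair_identity]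
  congr 1
  congr 1
  rw [Tq_eq, Tq_eq, hb]
  simp only [qform_fst, D.bar_sub, D.bar_add, sub_mul, add_mul, D.bar_mu_bar]
  abel

lemma lam_barlam_cancel (x : R) : D.lam * (D.bar D.lam * x) = x := by
  rw [← mul_assoc, D.lam_mul_barlam, one_mul]

lemma barlam_lam_cancel (x : R) : D.bar D.lam * (D.lam * x) = x := by
  rw [← mul_assoc, D.barlam_mul_lam, one_mul]

lemma mulVec_basis (A : Matrix (Idx n) (Idx n) R) (j : Idx n) :
    A.mulVec (fun i => if i = j then (1 : R) else 0) = fun i => A i j := by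
  funext i
  simp [Matrix.mulVec, dotProduct, mul_ite, mul_one, mul_zero, Finset.sum_ite_eq']

lemma mulVec_mul_right (A : Matrix (Idx n) (Idx n) R) (u : Idx n → R) (a : R) :
    A.mulVec (fun i => u i * a) = fun i => A.mulVec u i * a := by
  funext i
  simp only [Matrix.mulVec, dotProduct, Finset.sum_mul, mul_assoc]

lemma qform_basis (j : Idx n) :
    D.qform (fun i => if i = j then (1 : R) else 0)
      = ((if j = Idx.zero n then (1 : R) else 0), 0) := by
  unfold qform
  simp only [Prod.mk.injEq]
  constructor
  · simp [eq_comm]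
  · refine Finset.sum_eq_zero fun i hi => ?_
    have hip := (mem_posIdx i).1 hi
    by_cases h1 : i = j
    · subst h1
      rw [if_pos rfl, D.bar_one, one_mul,
        if_neg (show i.neg ≠ i from fun hc => by
          have := congrArg (fun x => x.1) hc; simp only [Idx.neg_val] at this; omega)]
    · rw [if_neg h1, D.bar_zero, zero_mul]

lemma bform_basisvec (j k : Idx n) :
    D.bform (fun i => if i = j then (1 : R) else 0) (fun i => if i = k then (1 : R) else 0)
      = if k.neg = j then D.cc n k else 0 := by
  rw [bform_eq_sum]
  rw [Finset.sum_eq_single k (fun i _ hik => by rw [if_neg hik, mul_zero])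
    (fun h => absurd (Finset.mem_univ k) h)]
  rw [if_pos rfl, mul_one]
  by_cases h : k.neg = j
  · rw [if_pos h, if_pos h, D.bar_one, one_mul]
  · rw [if_neg h, if_neg h, D.bar_zero, zero_mul]

lemma bform_eq_double (u v : Idx n → R) :
    D.bform u v = ∑ j, ∑ k, D.bar (u j) * (if k.neg = j then D.cc n k else 0) * v k := by
  rw [bform_eq_sum]
  rw [Finset.sum_comm]
  refine Finset.sum_congr rfl fun k _ => ?_
  have hcond : ∀ j : Idx n, (k.neg = j) = (j = k.neg) := fun j => propext eq_comm
  simp only [mul_ite, ite_mul, mul_zero, zero_mul, hcond, Finset.sum_ite_eq',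
    Finset.mem_univ, if_true]

lemma bform_mulVec_expand (A : Matrix (Idx n) (Idx n) R) (u v : Idx n → R) :
    D.bform (A.mulVec u) (A.mulVec v)
      = ∑ j, ∑ k, D.bar (u j) * D.bform (fun i => A i j) (fun i => A i k) * v k := by
  simp only [bform_eq_sum, Matrix.mulVec, dotProduct]
  trans ∑ i, ∑ j, ∑ k, D.bar (u j) * (D.bar (A i.neg j) * D.cc n i * A i k) * v k
  · refine Finset.sum_congr rfl fun i _ => ?_
    rw [D.bar_sum, Finset.sum_mul, Finset.sum_mul]
    refine Finset.sum_congr rfl fun j _ => ?_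
    rw [Finset.mul_sum]
    refine Finset.sum_congr rfl fun k _ => ?_
    rw [D.bar_mul]
    noncomm_ring
  · rw [Finset.sum_comm]
    refine Finset.sum_congr rfl fun j _ => ?_
    rw [Finset.sum_comm]
    refine Finset.sum_congr rfl fun k _ => ?_
    conv_rhs => rw [Finset.mul_sum, Finset.sum_mul]

/-- The row vector appearing in `b(σ_{*j}, σ_{*k})`. -/
def qrow (A : Matrix (Idx n) (Idx n) R) (j : Idx n) : Idx n → R :=
  fun i => D.bar (A i.neg j) * D.cc n i

/-- The row vector of values `b(e_j, e_k)`. -/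
def brow (j : Idx n) : Idx n → R := fun k => if k.neg = j then D.cc n k else 0

lemma bform_col (A : Matrix (Idx n) (Idx n) R) (j k : Idx n) :
    D.bform (fun i => A i j) (fun i => A i k) = Matrix.vecMul (D.qrow A j) A k := by
  rw [bform_eq_sum]
  simp [Matrix.vecMul, dotProduct, qrow]

lemma vecMul_brow (M : Matrix (Idx n) (Idx n) R) (j i : Idx n) :
    Matrix.vecMul (D.brow (n := n) j) M i = D.cc n j.neg * M j.neg i := by
  have hcond : ∀ k : Idx n, (k.neg = j) = (k = j.neg) :=
    fun k => propext ⟨fun h => by rw [← h, Idx.neg_neg], fun h => by rw [h, Idx.neg_neg]⟩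
  simp only [Matrix.vecMul, dotProduct, brow, ite_mul, zero_mul, hcond,
    Finset.sum_ite_eq', Finset.mem_univ, if_true]

lemma part1_main (σ : GLn R n) :
    (∀ u v : Idx n → R,
        D.bform (Matrix.mulVec σ.val u) (Matrix.mulVec σ.val v) = D.bform u v)
      ↔ ∀ i j : Idx n,
          D.cc n i * (σ⁻¹).val i j = D.bar (σ.val j.neg i.neg) * D.cc n j := by
  constructor
  · intro h i j
    have hC : ∀ j k : Idx n, Matrix.vecMul (D.qrow σ.val j) σ.val k = D.brow (n := n) j k := by
      intro j k
      rw [← bform_col]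
      have hc := h (fun i => if i = j then (1 : R) else 0) (fun i => if i = k then 1 else 0)
      rw [mulVec_basis, mulVec_basis, bform_basisvec] at hc
      simpa [brow] using hc
    have h2 : ∀ j0 : Idx n, D.qrow σ.val j0 = Matrix.vecMul (D.brow (n := n) j0) (σ⁻¹).val := by
      intro j0
      calc D.qrow σ.val j0 = Matrix.vecMul (D.qrow σ.val j0) 1 := (Matrix.vecMul_one _).symm
        _ = Matrix.vecMul (D.qrow σ.val j0) (σ.val * (σ⁻¹).val) := by rw [Units.mul_inv]
        _ = Matrix.vecMul (Matrix.vecMul (D.qrow σ.val j0) σ.val) (σ⁻¹).val := by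
              rw [Matrix.vecMul_vecMul]
        _ = Matrix.vecMul (D.brow (n := n) j0) (σ⁻¹).val := by
              rw [show Matrix.vecMul (D.qrow σ.val j0) σ.val = D.brow (n := n) j0 from
                funext fun k => hC j0 k]
    have h3 := congrFun (h2 i.neg) j
    rw [vecMul_brow, Idx.neg_neg] at h3
    simp only [qrow] at h3
    exact h3.symm
  · intro h u v
    have h2 : ∀ j0 : Idx n,
        Matrix.vecMul (D.brow (n := n) j0) (σ⁻¹).val = D.qrow σ.val j0 := by
      intro j0
      funext i0
      rw [vecMul_brow]
      have hc := h j0.neg i0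
      rw [Idx.neg_neg] at hc
      rw [hc]
      simp [qrow]
    have hC : ∀ j k : Idx n, Matrix.vecMul (D.qrow σ.val j) σ.val k = D.brow (n := n) j k := by
      intro j k
      conv_lhs => rw [← h2 j]
      rw [Matrix.vecMul_vecMul, Units.inv_mul, Matrix.vecMul_one]
    rw [bform_mulVec_expand, bform_eq_double]
    refine Finset.sum_congr rfl fun j _ => Finset.sum_congr rfl fun k _ => ?_
    rw [bform_col, hC]
    simp [brow]

lemma cc_ne {j : Idx n} (h : j.1 ≠ 0) : D.cc n j = if 0 < j.1 then D.lam else 1 := by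
  by_cases hp : 0 < j.1
  · rw [D.cc_pos hp, if_pos hp]
  · rw [D.cc_neg (by omega), if_neg hp]

lemma cond_iff_stated (σ : GLn R n) :
    ((∀ i j : Idx n, i.1 ≠ 0 → j.1 ≠ 0 →
        (σ⁻¹).val i j
          = (if 0 < i.1 then D.bar D.lam else 1) * D.bar (σ.val j.neg i.neg) *
              (if 0 < j.1 then D.lam else 1)) ∧
      (∀ j : Idx n, j.1 ≠ 0 →
        D.mu * (σ⁻¹).val (Idx.zero n) j
          = D.bar (σ.val j.neg (Idx.zero n)) * (if 0 < j.1 then D.lam else 1)) ∧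
      (∀ i : Idx n, i.1 ≠ 0 →
        (σ⁻¹).val i (Idx.zero n)
          = (if 0 < i.1 then D.bar D.lam else 1) * D.bar (σ.val (Idx.zero n) i.neg) * D.mu) ∧
      D.mu * (σ⁻¹).val (Idx.zero n) (Idx.zero n)
        = D.bar (σ.val (Idx.zero n) (Idx.zero n)) * D.mu)
    ↔ ∀ i j : Idx n, D.cc n i * (σ⁻¹).val i j = D.bar (σ.val j.neg i.neg) * D.cc n j := by
  constructor
  · rintro ⟨h1, h2, h3, h4⟩ i j
    by_cases hiz : i.1 = 0
    · have hi0 : i = Idx.zero n := (Idx.eq_zero_iff i).2 hiz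
      subst hi0
      by_cases hjz : j.1 = 0
      · have hj0 : j = Idx.zero n := (Idx.eq_zero_iff j).2 hjz
        subst hj0
        rw [D.cc_zero, Idx.neg_zero]
        exact h4
      · rw [D.cc_zero, D.cc_ne hjz, Idx.neg_zero]
        exact h2 j hjz
    · by_cases hjz : j.1 = 0
      · have hj0 : j = Idx.zero n := (Idx.eq_zero_iff j).2 hjz
        subst hj0
        rw [D.cc_zero, Idx.neg_zero]
        by_cases hp : 0 < i.1
        · rw [D.cc_pos hp, h3 i hiz, if_pos hp]
          simp only [← mul_assoc]
          rw [D.lam_mul_barlam, one_mul]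
        · rw [D.cc_neg (by omega), one_mul, h3 i hiz, if_neg hp, one_mul]
      · rw [D.cc_ne hjz]
        by_cases hp : 0 < i.1
        · rw [D.cc_pos hp, h1 i j hiz hjz, if_pos hp]
          simp only [← mul_assoc]
          rw [D.lam_mul_barlam, one_mul]
        · rw [D.cc_neg (by omega), one_mul, h1 i j hiz hjz, if_neg hp, one_mul]
  · intro h
    refine ⟨?_, ?_, ?_, ?_⟩
    · intro i j hi hj
      have hc := h i j
      by_cases hp : 0 < i.1
      · rw [D.cc_pos hp] at hc
        rw [if_pos hp]
        calc (σ⁻¹).val i j = D.bar D.lam * (D.lam * (σ⁻¹).val i j) :=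
              (D.barlam_lam_cancel _).symm
          _ = D.bar D.lam * (D.bar (σ.val j.neg i.neg) * D.cc n j) := by rw [hc]
          _ = _ := by rw [D.cc_ne hj, ← mul_assoc]
      · rw [D.cc_neg (by omega), one_mul] at hc
        rw [if_neg hp, one_mul, hc, D.cc_ne hj]
    · intro j hj
      have hc := h (Idx.zero n) j
      rw [D.cc_zero] at hc
      rw [hc, Idx.neg_zero, D.cc_ne hj]
    · intro i hi
      have hc := h i (Idx.zero n)
      rw [D.cc_zero, Idx.neg_zero] at hc
      by_cases hp : 0 < i.1
      · rw [D.cc_pos hp] at hc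
        rw [if_pos hp]
        calc (σ⁻¹).val i (Idx.zero n)
              = D.bar D.lam * (D.lam * (σ⁻¹).val i (Idx.zero n)) :=
              (D.barlam_lam_cancel _).symm
          _ = D.bar D.lam * (D.bar (σ.val (Idx.zero n) i.neg) * D.mu) := by rw [hc]
          _ = _ := by rw [← mul_assoc]
      · rw [D.cc_neg (by omega), one_mul] at hc
        rw [if_neg hp, one_mul, hc]
    · have hc := h (Idx.zero n) (Idx.zero n)
      rw [D.cc_zero, Idx.neg_zero] at hc
      exact hc

lemma hSub_qform_mem {Δ : Set (R × R)} (hΔ : D.IsFormParam Δ) (σ : GLn R n)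
    (hb : ∀ u v : Idx n → R,
      D.bform (Matrix.mulVec σ.val u) (Matrix.mulVec σ.val v) = D.bform u v)
    (hq : ∀ j : Idx n,
      D.hSub (D.qform (fun i => σ.val i j))
        ((if j = Idx.zero n then (1 : R) else 0), 0) ∈ Δ)
    (u : Idx n → R) : D.hSub (D.qform (Matrix.mulVec σ.val u)) (D.qform u) ∈ Δ := by
  have hzero : ((0 : R), (0 : R)) ∈ Δ :=
    hΔ.min_le ⟨0, by simp [D.bar_zero]⟩
  have key : ∀ s : Finset (Idx n),
      D.hSub (D.qform (Matrix.mulVec σ.val (fun i => if i ∈ s then u i else 0)))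
        (D.qform (fun i => if i ∈ s then u i else 0)) ∈ Δ := by
    intro s
    induction s using Finset.induction_on with
    | empty =>
        simp only [Finset.notMem_empty, if_false]
        have h0 : (fun _ : Idx n => (0 : R)) = (0 : Idx n → R) := rfl
        rw [h0, Matrix.mulVec_zero]
        have hq0 : D.qform (0 : Idx n → R) = (0, 0) := by
          unfold qform
          simp [D.bar_zero]
        rw [hq0, D.hSub_def']
        simpa [D.bar_zero] using hzero
    | @insert j s hj ih =>
        have hsplit : (fun i => if i ∈ insert j s then u i else 0)
            = (fun i => if i ∈ s then u i else 0)
              + (fun i => (if i = j then (1 : R) else 0) * u j) := by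
          funext i
          simp only [Finset.mem_insert, Pi.add_apply]
          by_cases h1 : i = j
          · subst h1
            rw [if_pos (Or.inl rfl), if_neg hj, if_pos rfl, one_mul, zero_add]
          · rw [if_neg h1, zero_mul, add_zero]
            by_cases h2 : i ∈ s
            · rw [if_pos h2, if_pos (Or.inr h2)]
            · rw [if_neg h2, if_neg (by tauto)]
        rw [hsplit, Matrix.mulVec_add]
        rw [D.hSub_qform_add _ _ _ _ (hb _ _)]
        have hX : D.hSub
            (D.qform (Matrix.mulVec σ.val (fun i => (if i = j then (1 : R) else 0) * u j)))
            (D.qform (fun i => (if i = j then (1 : R) else 0) * u j)) ∈ Δ := by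
          rw [mulVec_mul_right]
          simp only [mulVec_basis]
          rw [D.qform_smul, D.qform_smul, D.hSub_hSMul, D.qform_basis]
          exact hΔ.smul_mem _ (hq j) (u j)
        exact hΔ.add_mem _ (hΔ.add_mem _ hX _ ih) _ (hΔ.min_le ⟨_, rfl⟩)
  have hu := key Finset.univ
  simpa using hu

end OddFormRingData

end Aux



/-- Characterization of membership in `U_{2n+1}(R, Δ)` in terms of the entries of `σ` and
`σ⁻¹` and the quadratic map on columns. -/
theorem statement12 {R : Type*} [Ring R] [Nontrivial R] (D : OddFormRingData R)
    (Δ : Set (R × R)) (hΔ : D.IsFormParam Δ) (n : ℕ) (σ : GLn R n) :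
    σ ∈ D.unitary Δ n ↔
      ((∀ i j : Idx n, i.1 ≠ 0 → j.1 ≠ 0 →
          (σ⁻¹).val i j
            = (if 0 < i.1 then D.bar D.lam else 1) * D.bar (σ.val j.neg i.neg) *
                (if 0 < j.1 then D.lam else 1)) ∧
        (∀ j : Idx n, j.1 ≠ 0 →
          D.mu * (σ⁻¹).val (Idx.zero n) j
            = D.bar (σ.val j.neg (Idx.zero n)) * (if 0 < j.1 then D.lam else 1)) ∧
        (∀ i : Idx n, i.1 ≠ 0 →
          (σ⁻¹).val i (Idx.zero n)
            = (if 0 < i.1 then D.bar D.lam else 1) * D.bar (σ.val (Idx.zero n) i.neg) * D.mu) ∧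
        D.mu * (σ⁻¹).val (Idx.zero n) (Idx.zero n)
          = D.bar (σ.val (Idx.zero n) (Idx.zero n)) * D.mu) ∧
      ∀ j : Idx n,
        D.hSub (D.qform (fun i => σ.val i j))
          ((if j = Idx.zero n then (1 : R) else 0), 0) ∈ Δ := by
  simp only [OddFormRingData.unitary, Set.mem_setOf_eq]
  constructor
  · rintro ⟨hb, hq⟩
    constructor
    · exact (D.cond_iff_stated σ).mpr ((D.part1_main σ).mp hb)
    · intro j
      have hj := hq (fun i => if i = j then (1 : R) else 0)
      rw [OddFormRingData.mulVec_basis, D.qform_basis] at hj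
      exact hj
  · rintro ⟨hstated, hq⟩
    have hb := (D.part1_main σ).mpr ((D.cond_iff_stated σ).mp hstated)
    exact ⟨hb, D.hSub_qform_mem hΔ σ hb hq⟩
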